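/- Let G be a countable graph and G' an induced subgraph such that some vertex v on the boundary of G' has finite degree. Then there exists ψ in the form domain V such that the projection Pψ of ψ onto L²(G') is not continuous at v, i.e., Pψ ∉ V. Consequently L²(G') is not invariant under the heat semigroup. -/

import Mathlib

open scoped Classical

/-- `ψ` is in the form domain `V` of the network: each `ψ_e ∈ H¹(0,1)` (witnessed by a
derivative `g_e`), the `H¹`-norms are square-summable, and `ψ` is continuous in the nodes with
node values `dψ ∈ ℓ²(V)` matching the traces at the start and end vertices. -/
def InFormDomain {V E : Type*} (startE endE : E → V) (ψ : E → ℝ → ℂ) (dψ : V → ℂ) : Prop :=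
  (∃ g : E → ℝ → ℂ, (∀ e t, HasDerivAt (ψ e) (g e t) t) ∧
      Summable (fun e : E =>
        (∫ t in (0:ℝ)..1, ‖ψ e t‖ ^ 2) + ∫ t in (0:ℝ)..1, ‖g e t‖ ^ 2)) ∧
  Memℓp dψ 2 ∧ ∀ e, ψ e 0 = dψ (startE e) ∧ ψ e 1 = dψ (endE e)

/-- Let `G'` be the subgraph induced by `V'` and let `v` be a boundary vertex of
`G'` (i.e. `v ∈ V'` is incident to an edge of `G'` and adjacent to a vertex outside `V'`) of
finite degree. Then there exists `ψ` in the form domain whose projection onto `L²(G')` is not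
continuous at `v`, i.e. `Pψ` is not in the form domain; consequently `L²(G')` is not invariant
under the heat semigroup. -/
theorem projection_fails_at_finite_degree_boundary {V E : Type*} [Countable V] [Countable E]
    (startE endE : E → V) (V' : Set V) (v : V) (hv : v ∈ V')
    (hfin : {e : E | startE e = v ∨ endE e = v}.Finite)
    (hin : ∃ e : E, (startE e ∈ V' ∧ endE e ∈ V') ∧ (startE e = v ∨ endE e = v))
    (hadj : ∃ w ∉ V', ∃ e : E, (startE e = v ∧ endE e = w) ∨ (startE e = w ∧ endE e = v)) :
    ∃ (ψ : E → ℝ → ℂ) (dψ : V → ℂ), InFormDomain startE endE ψ dψ ∧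
      ¬ ∃ d' : V → ℂ, InFormDomain startE endE
          (fun e : E => if startE e ∈ V' ∧ endE e ∈ V' then ψ e else 0) d' := by
  classical
  set dψ : V → ℂ := fun u => if u = v then 1 else 0 with hdψ
  set ψ : E → ℝ → ℂ :=
    fun e t => dψ (startE e) + (dψ (endE e) - dψ (startE e)) * (t : ℂ) with hψ
  refine ⟨ψ, dψ, ⟨⟨fun e _ => dψ (endE e) - dψ (startE e), ?_, ?_⟩, ?_, ?_⟩, ?_⟩
  · intro e t
    have h := (Complex.ofRealCLM.hasDerivAt (x := t)).const_mul
      (dψ (endE e) - dψ (startE e))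
    simpa [hψ] using h.const_add (dψ (startE e))
  · apply summable_of_ne_finset_zero (s := hfin.toFinset)
    intro e he
    have hs : ¬ (startE e = v ∨ endE e = v) := fun hmem => he (hfin.mem_toFinset.mpr hmem)
    push_neg at hs
    have h1 : dψ (startE e) = 0 := if_neg hs.1
    have h2 : dψ (endE e) = 0 := if_neg hs.2
    simp [hψ, h1, h2]
  · refine memℓp_gen ?_
    apply summable_of_ne_finset_zero (s := {v})
    intro u hu
    have : u ≠ v := by simpa using hu
    simp [hdψ, this]
  · intro e
    refine ⟨by simp [hψ], ?_⟩
    simp [hψ]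
    try ring
  · rintro ⟨d', -, -, htr⟩
    obtain ⟨e0, ⟨hs0, he0'⟩, hv0⟩ := hin
    obtain ⟨w, hw, e1, h1⟩ := hadj
    have hd1 : d' v = 1 := by
      rcases hv0 with h0 | h0
      · have h := (htr e0).1
        simp only [if_pos (show startE e0 ∈ V' ∧ endE e0 ∈ V' from ⟨hs0, he0'⟩)] at h
        rw [h0] at h
        rw [← h]
        simp [hψ, hdψ, h0]
      · have h := (htr e0).2
        simp only [if_pos (show startE e0 ∈ V' ∧ endE e0 ∈ V' from ⟨hs0, he0'⟩)] at h
        rw [h0] at h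
        rw [← h]
        simp [hψ, hdψ, h0]
        try ring
    have hd0 : d' v = 0 := by
      rcases h1 with ⟨ha, hb⟩ | ⟨ha, hb⟩
      · have h := (htr e1).1
        simp only [if_neg (show ¬(startE e1 ∈ V' ∧ endE e1 ∈ V') from fun hc => hw (hb ▸ hc.2)), Pi.zero_apply] at h
        rw [ha] at h
        exact h.symm
      · have h := (htr e1).2
        simp only [if_neg (show ¬(startE e1 ∈ V' ∧ endE e1 ∈ V') from fun hc => hw (ha ▸ hc.1)), Pi.zero_apply] at h
        rw [hb] at h
        exact h.symm
    rw [hd1] at hd0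
    exact one_ne_zero hd0
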